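/- Let H be a finite connected simple graph not isomorphic to K2 and let u be a leaf of H. Then the sibling equivalence class of u in H is the singleton {u}, and the vertex {u} is a leaf of the quotient graph ρ(H). -/

import Mathlib

open SimpleGraph

universe u

/-- The closed neighborhood of a vertex. -/
def closedNbhd {V : Type u} (G : SimpleGraph V) (v : V) : Set V :=
  insert v (G.neighborSet v)

/-- Two vertices are siblings if they share the same closed neighborhood. -/
def Sibling {V : Type u} (G : SimpleGraph V) (u v : V) : Prop :=
  closedNbhd G u = closedNbhd G v

/-- A leaf is a vertex of degree one. -/
def IsLeaf {V : Type u} (G : SimpleGraph V) (v : V) : Prop :=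
  Nat.card (G.neighborSet v) = 1

/-- The tuft number: the maximal number of leaves adjacent to a single vertex. -/
noncomputable def tuftNumber {V : Type u} (G : SimpleGraph V) : ℕ :=
  ⨆ v : V, Nat.card {u | IsLeaf G u ∧ G.Adj v u}

/-- The sibling number: the maximum over vertices `v` of the number of vertices sharing
the closed neighborhood of `v`, minus one. -/
noncomputable def siblingNumber {V : Type u} (G : SimpleGraph V) : ℕ :=
  ⨆ v : V, (Nat.card {u | Sibling G u v} - 1)

/-- The complete graph on two vertices. -/
def K2 : SimpleGraph (Fin 2) := ⊤

/-- The sibling relation as a setoid. -/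
def siblingSetoid {V : Type u} (G : SimpleGraph V) : Setoid V :=
  ⟨Sibling G, ⟨fun _ => rfl, fun {_ _} h => Eq.symm h, fun {_ _ _} h h' => Eq.trans h h'⟩⟩

/-- `rho G` is the quotient of `G` by the sibling relation: vertices are sibling
equivalence classes, two distinct classes being adjacent iff some pair of
representatives is adjacent. -/
def rho {V : Type u} (G : SimpleGraph V) : SimpleGraph (Quotient (siblingSetoid G)) where
  Adj A B := A ≠ B ∧ ∃ u v : V, Quotient.mk (siblingSetoid G) u = A ∧
      Quotient.mk (siblingSetoid G) v = B ∧ G.Adj u v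
  symm := by
    refine ⟨?_⟩
    rintro A B ⟨hne, u, v, hu, hv, h⟩
    exact ⟨hne.symm, v, u, hv, hu, h.symm⟩
  loopless := by
    refine ⟨?_⟩
    rintro A ⟨hne, -⟩
    exact hne rfl

/-- `lamS G S` is the induced subgraph on the complement of `S`. -/
def lamS {V : Type u} (G : SimpleGraph V) (S : Set V) : SimpleGraph ↥(Sᶜ) :=
  SimpleGraph.induce Sᶜ G

/-- `lam G` is the induced subgraph on the set of non-leaf vertices. -/
def lam {V : Type u} (G : SimpleGraph V) : SimpleGraph ↥{v : V | ¬ IsLeaf G v} :=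
  SimpleGraph.induce {v : V | ¬ IsLeaf G v} G

/-- A finite graph, bundled with its vertex type. -/
structure FinGraph : Type (u + 1) where
  V : Type u
  [finite : Finite V]
  G : SimpleGraph V

attribute [instance] FinGraph.finite

/-- One reduction step: remove all leaves, then contract each sibling class to a point. -/
def redStep (X : FinGraph.{u}) : FinGraph.{u} :=
  ⟨Quotient (siblingSetoid (lam X.G)), rho (lam X.G)⟩

/-- The reduction of a finite graph: iterate `redStep` until it stabilizes (up to
isomorphism this happens after at most `Nat.card X.V` steps). -/
noncomputable def reduction (X : FinGraph.{u}) : FinGraph.{u} :=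
  redStep^[Nat.card X.V] X

/-- `G` contains an induced cycle on `n` vertices. -/
def HasInducedCycle {V : Type u} (G : SimpleGraph V) (n : ℕ) : Prop :=
  ∃ s : Set V, Nonempty (SimpleGraph.induce s G ≃g cycleGraph n)

/-- A graph is chordal if it has no induced cycle on four or more vertices. -/
def Chordal {V : Type u} (G : SimpleGraph V) : Prop :=
  ∀ m : ℕ, 4 ≤ m → ¬ HasInducedCycle G m

/-- The setoid identifying isomorphic graphs on `Fin n` satisfying a property `P`. -/
def graphSetoid (n : ℕ) (P : SimpleGraph (Fin n) → Prop) :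
    Setoid {G : SimpleGraph (Fin n) // P G} :=
  ⟨fun G H => Nonempty (G.1 ≃g H.1),
    ⟨fun _ => ⟨Iso.refl⟩, fun ⟨e⟩ => ⟨e.symm⟩, fun ⟨e⟩ ⟨f⟩ => ⟨e.trans f⟩⟩⟩

/-- The number of isomorphism classes of graphs on `n` vertices satisfying `P`. -/
noncomputable def numClasses (n : ℕ) (P : SimpleGraph (Fin n) → Prop) : ℕ :=
  Nat.card (Quotient (graphSetoid n P))

/-- In a connected graph `H` other than `K2`, the sibling class of a leaf `u` is the
singleton `{u}`, and this class is a leaf of the quotient graph `ρ(H)`. -/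
theorem leaf_sibling_class_singleton {V : Type} [Fintype V] (H : SimpleGraph V)
    (hc : H.Connected) (hK2 : ¬ Nonempty (H ≃g K2)) (u : V) (hu : IsLeaf H u) :
    {v : V | Sibling H u v} = {u} ∧
    IsLeaf (rho H) (Quotient.mk (siblingSetoid H) u) := by
  -- `u` has a unique neighbor `w`.
  obtain ⟨w, hw⟩ : ∃ w, H.neighborSet u = {w} := by
    rw [IsLeaf, Nat.card_coe_set_eq] at hu
    exact Set.ncard_eq_one.mp hu
  have huw : H.Adj u w := by rw [← SimpleGraph.mem_neighborSet, hw]; rfl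
  have hNu : closedNbhd H u = {u, w} := by
    unfold closedNbhd; rw [hw]
  have hclass : {v : V | Sibling H u v} = {u} := by
    classical
    ext v
    simp only [Set.mem_setOf_eq, Set.mem_singleton_iff]
    constructor
    · intro hs
      by_contra hne
      have hvN : v ∈ closedNbhd H u := by
        rw [hs]; exact Set.mem_insert _ _
      rw [hNu] at hvN
      have hvw : w = v := by
        rcases hvN with h | h
        · exact absurd h (Ne.symm (fun h' => hne h'.symm))
        · exact h.symm
      subst hvw
      -- Now N[w] = {u, w}, so w's only neighbor is u.
      have hNw : H.neighborSet w = {u} := by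
        have hcw : closedNbhd H w = {u, w} := by rw [← hs, hNu]
        ext x
        simp only [Set.mem_singleton_iff]
        constructor
        · intro hx
          have hx' : x ∈ closedNbhd H w := Set.mem_insert_of_mem _ hx
          rw [hcw] at hx'
          rcases hx' with h | h
          · exact h
          · exact absurd (h ▸ hx) (H.irrefl)
        · rintro rfl; exact huw.symm
      -- Every vertex is `u` or `w` by connectivity.
      set S : Set V := {u, w} with hS
      have hstep : ∀ x ∈ S, ∀ z, H.Adj x z → z ∈ S := by
        rintro x (rfl | rfl) z hz
        · have : z ∈ H.neighborSet x := hz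
          rw [hw] at this
          exact Or.inr this
        · have : z ∈ H.neighborSet x := hz
          rw [hNw] at this
          exact Or.inl this
      have hall : ∀ x : V, x ∈ S := by
        intro x
        obtain ⟨p⟩ := hc.preconnected u x
        have : ∀ {a b : V}, H.Walk a b → a ∈ S → b ∈ S := by
          intro a b q
          induction q with
          | nil => exact id
          | cons h _ ih => exact fun ha => ih (hstep _ ha _ h)
        exact this p (Set.mem_insert _ _)
      have hne' : u ≠ w := huw.ne
      -- Build an isomorphism H ≃g K2.
      have hadj : ∀ x y : V, H.Adj x y ↔ x ≠ y := by
        intro x y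
        constructor
        · exact fun h => h.ne
        · intro hxy
          rcases hall x with rfl | rfl <;> rcases hall y with rfl | rfl
          · exact absurd rfl hxy
          · exact huw
          · exact huw.symm
          · exact absurd rfl hxy
      refine hK2 ⟨{ toFun := fun x => if x = u then 0 else 1,
                    invFun := fun i => if i = 0 then u else w,
                    left_inv := ?_, right_inv := ?_, map_rel_iff' := ?_ }⟩
      · intro x
        rcases hall x with rfl | rfl
        · simp
        · simp [Ne.symm hne']
      · intro i
        fin_cases i
        · simp
        · simp [Ne.symm hne']
      · intro x y
        simp only [Equiv.coe_fn_mk, K2, SimpleGraph.top_adj, hadj]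
        rcases hall x with rfl | rfl <;> rcases hall y with rfl | rfl <;>
          simp [hne', Ne.symm hne']
    · rintro rfl; rfl
  refine ⟨hclass, ?_⟩
  -- The class of `u` is a leaf of `rho H`, its unique neighbor is the class of `w`.
  have hclassmem : ∀ x : V, Quotient.mk (siblingSetoid H) x = Quotient.mk (siblingSetoid H) u → x = u := by
    intro x hx
    have : Sibling H x u := Quotient.eq''.mp hx
    have : x ∈ {v : V | Sibling H u v} := Eq.symm this
    rwa [hclass] at this
  have hne : Quotient.mk (siblingSetoid H) u ≠ Quotient.mk (siblingSetoid H) w := by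
    intro h
    exact huw.ne' (hclassmem w h.symm)
  have hNset : (rho H).neighborSet (Quotient.mk (siblingSetoid H) u)
      = {Quotient.mk (siblingSetoid H) w} := by
    ext B
    simp only [SimpleGraph.mem_neighborSet, Set.mem_singleton_iff]
    constructor
    · rintro ⟨-, x, y, hx, hy, hxy⟩
      have hxu : x = u := hclassmem x hx
      subst hxu
      have : y ∈ H.neighborSet x := hxy
      rw [hw] at this
      rw [← hy, this]
    · rintro rfl
      exact ⟨hne, u, w, rfl, rfl, huw⟩
  rw [IsLeaf, Nat.card_coe_set_eq, hNset, Set.ncard_singleton]
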